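/- Let τ = (1 + √5)/2 and λ_k = (⌈k/τ⌉ + kτ)/τ² for k ∈ ℤ. Then for every n ≥ 1 and every k ∈ ℤ there exists an integer m with −n ≤ m ≤ 0 such that λ_{k+i+1} − λ_{k+i} = λ_{m+i+1} − λ_{m+i} for all 0 ≤ i < n. In other words, the left-hand ends of all possible n-letter words of the Fibonacci chain occur among the n+1 points λ_{−n}, …, λ_0. -/
import Mathlib

open MeasureTheory Set Filter

noncomputable section

/-- The golden mean `τ = (1 + √5)/2`. -/
def tau : ℝ := (1 + Real.sqrt 5) / 2

/-- The cut-and-project model set `Σ^Ω = { a + bτ : a, b ∈ ℤ, a - b/τ ∈ Ω }`. -/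
def SigmaSet (Ω : Set ℝ) : Set ℝ :=
  {x | ∃ a b : ℤ, x = (a : ℝ) + (b : ℝ) * tau ∧ (a : ℝ) - (b : ℝ) / tau ∈ Ω}

/-- The increasing enumeration `λ_k = (⌈k/τ⌉ + kτ)/τ²` of the rescaled Fibonacci
chain `Σ^{[0,τ²)}`. -/
def fibChain (k : ℤ) : ℝ := ((⌈(k : ℝ) / tau⌉ : ℝ) + (k : ℝ) * tau) / tau ^ 2

/-- `σ = τ - 1 = 1/τ`. -/
def sig : ℝ := tau - 1

lemma sqrt5_sq : Real.sqrt 5 ^ 2 = 5 := Real.sq_sqrt (by norm_num)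
lemma sqrt5_lt : Real.sqrt 5 < 3 := by nlinarith [sqrt5_sq, Real.sqrt_nonneg 5]
lemma sqrt5_gt : 1 < Real.sqrt 5 := by nlinarith [sqrt5_sq, Real.sqrt_nonneg 5]
lemma tau_gt : 1 < tau := by unfold tau; nlinarith [sqrt5_gt]
lemma tau_lt : tau < 2 := by unfold tau; nlinarith [sqrt5_lt]
lemma tau_sq : tau ^ 2 = tau + 1 := by unfold tau; nlinarith [sqrt5_sq]
lemma sig_pos : 0 < sig := by unfold sig; linarith [tau_gt]
lemma sig_lt_one : sig < 1 := by unfold sig; linarith [tau_lt]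
lemma tau_pos : 0 < tau := lt_trans one_pos tau_gt
lemma div_tau (x : ℝ) : x / tau = x * sig := by
  have h : sig * tau = 1 := by unfold sig; nlinarith [tau_sq]
  rw [div_eq_iff (ne_of_gt tau_pos), mul_assoc, h, mul_one]

/-- `u k = ⌈kσ⌉ - kσ ∈ [0,1)`. -/
def u (k : ℤ) : ℝ := (⌈(k : ℝ) * sig⌉ : ℝ) - (k : ℝ) * sig

lemma u_nonneg (k : ℤ) : 0 ≤ u k := by
  unfold u; linarith [Int.le_ceil ((k : ℝ) * sig)]

lemma u_lt_one (k : ℤ) : u k < 1 := by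
  unfold u; linarith [Int.ceil_lt_add_one ((k : ℝ) * sig)]

lemma u_zero : u 0 = 0 := by
  unfold u; norm_num

/-- Ceiling step formula. -/
lemma ceil_step (k : ℤ) :
    (⌈((k : ℝ) + 1) * sig⌉ : ℤ) = ⌈(k : ℝ) * sig⌉ + (if u k < sig then 1 else 0) := by
  have h1 : ((k : ℝ) + 1) * sig = (sig - u k) + (⌈(k : ℝ) * sig⌉ : ℤ) := by
    unfold u; push_cast; ring
  rw [h1, Int.ceil_add_intCast]
  have h2 : (⌈sig - u k⌉ : ℤ) = if u k < sig then 1 else 0 := by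
    by_cases h : u k < sig
    · rw [if_pos h, Int.ceil_eq_iff]
      constructor
      · push_cast; linarith
      · push_cast; linarith [u_nonneg k, sig_lt_one]
    · rw [if_neg h]
      push_neg at h
      rw [Int.ceil_eq_iff]
      constructor
      · push_cast; linarith [u_lt_one k, sig_pos]
      · push_cast; linarith
  rw [h2]; ring

/-- Recurrence for `u`. -/
lemma u_step (k : ℤ) : u (k + 1) = u k + (if u k < sig then 1 else 0) - sig := by
  unfold u
  have : ((k + 1 : ℤ) : ℝ) = (k : ℝ) + 1 := by push_cast; ring
  rw [this, ceil_step k]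
  push_cast
  unfold u
  ring

lemma int_diff_eq {x y : ℝ} (N : ℤ) (h : x - y = N) (hx0 : 0 ≤ x) (hx1 : x < 1)
    (hy0 : 0 ≤ y) (hy1 : y < 1) : x = y := by
  have h1 : (-1 : ℝ) < (N : ℝ) := by linarith
  have h2 : (N : ℝ) < 1 := by linarith
  have h3 : (-1 : ℤ) < N := by exact_mod_cast h1
  have h4 : N < 1 := by exact_mod_cast h2
  have : N = 0 := by omega
  rw [this] at h
  push_cast at h
  linarith

/-- Key combinatorial lemma. -/
lemma key (n : ℕ) (k : ℤ) :
    ∃ m : ℤ, -(n : ℤ) ≤ m ∧ m ≤ 0 ∧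
      ∀ i : ℕ, i < n → (u (k + i) < sig ↔ u (m + i) < sig) := by
  classical
  set S : Finset ℕ := (Finset.range (n + 1)).filter (fun j => u (-(j : ℤ)) ≤ u k) with hS
  have h0 : 0 ∈ S := by
    rw [hS, Finset.mem_filter, Finset.mem_range]
    refine ⟨by omega, ?_⟩
    simp only [Nat.cast_zero, neg_zero, u_zero]
    exact u_nonneg k
  obtain ⟨j, hjS, hmax⟩ := S.exists_max_image (fun j => u (-(j : ℤ))) ⟨0, h0⟩
  have hjr : j < n + 1 := Finset.mem_range.mp (Finset.mem_filter.mp hjS).1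
  have hjle : u (-(j : ℤ)) ≤ u k := (Finset.mem_filter.mp hjS).2
  set m : ℤ := -(j : ℤ) with hm
  have hmk : u m ≤ u k := hjle
  -- no crossing lemma
  have nocross : ∀ i : ℕ, i < n → u (k + i) - u (m + i) = u k - u m →
      ¬(u (m + i) < sig ∧ sig ≤ u (k + i)) := by
    rintro i hi hdiff ⟨h1, h2⟩
    set p : ℝ := u m + (sig - u (m + i)) with hp
    have hp1 : u m < p := by simp [hp]; linarith
    have hp2 : p ≤ u k := by
      have : sig - u (m + i) ≤ u (k + i) - u (m + i) := by linarith
      rw [hdiff] at this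
      simp [hp]; linarith
    have hp0 : 0 ≤ p := le_trans (u_nonneg m) (le_of_lt hp1)
    have hp3 : p < 1 := lt_of_le_of_lt hp2 (u_lt_one k)
    -- p = u (-(i+1))
    have hpc : p = u (-((i : ℤ) + 1)) := by
      have hNdef : p - u (-((i : ℤ) + 1)) =
          ((⌈(m : ℝ) * sig⌉ - ⌈((m + i : ℤ) : ℝ) * sig⌉ - ⌈((-((i : ℤ) + 1)) : ℝ) * sig⌉ : ℤ) : ℝ) := by
        simp only [hp]
        unfold u
        push_cast
        ring
      exact int_diff_eq _ hNdef hp0 hp3 (u_nonneg _) (u_lt_one _)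
    have hmem : i + 1 ∈ S := by
      rw [hS, Finset.mem_filter, Finset.mem_range]
      constructor
      · omega
      · have : (-(((i : ℕ) + 1 : ℕ) : ℤ)) = -((i : ℤ) + 1) := by push_cast; ring
        rw [this, ← hpc]
        exact hp2
    have := hmax (i + 1) hmem
    have hcst : (-(((i : ℕ) + 1 : ℕ) : ℤ)) = -((i : ℤ) + 1) := by push_cast; ring
    rw [hcst, ← hpc] at this
    linarith
  -- main induction: difference invariant
  have inv : ∀ i : ℕ, i ≤ n → u (k + i) - u (m + i) = u k - u m := by
    intro i
    induction i with
    | zero => intro _; norm_num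
    | succ i ih =>
      intro hi
      have hi' : i < n := by omega
      have hprev := ih (by omega)
      have hle : u (m + i) ≤ u (k + i) := by linarith
      have hk1 : (k + ((i : ℕ) + 1 : ℕ) : ℤ) = (k + i) + 1 := by push_cast; ring
      have hm1 : (m + ((i : ℕ) + 1 : ℕ) : ℤ) = (m + i) + 1 := by push_cast; ring
      rw [hk1, hm1, u_step, u_step]
      by_cases h : u (k + i) < sig
      · have h' : u (m + i) < sig := lt_of_le_of_lt hle h
        rw [if_pos h, if_pos h']
        linarith
      · push_neg at h
        have h' : ¬ u (m + i) < sig := by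
          intro hc
          exact nocross i hi' hprev ⟨hc, h⟩
        rw [if_neg (not_lt.mpr h), if_neg h']
        linarith
  refine ⟨m, by omega, by omega, ?_⟩
  intro i hi
  have hprev := inv i (le_of_lt hi)
  have hle : u (m + i) ≤ u (k + i) := by linarith
  constructor
  · intro h; exact lt_of_le_of_lt hle h
  · intro h
    by_contra hc
    push_neg at hc
    exact nocross i hi hprev ⟨h, hc⟩

/-- Gap formula. -/
lemma gap (t : ℤ) :
    fibChain (t + 1) - fibChain t = ((if u t < sig then (1 : ℝ) else 0) + tau) / tau ^ 2 := by
  unfold fibChain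
  rw [div_tau, div_tau]
  have h1 : ((t + 1 : ℤ) : ℝ) = (t : ℝ) + 1 := by push_cast; ring
  rw [h1, ceil_step t]
  have htau2 : tau ^ 2 ≠ 0 := pow_ne_zero 2 (ne_of_gt tau_pos)
  push_cast
  by_cases h : u t < sig
  · rw [if_pos h]; field_simp; ring
  · rw [if_neg h]; field_simp; ring

/-- every `n`-letter word of the Fibonacci chain occurs with its
left-hand end among the points `λ_{-n}, …, λ_0`. -/
theorem statement13 (n : ℕ) (hn : 1 ≤ n) (k : ℤ) :
    ∃ m : ℤ, -(n : ℤ) ≤ m ∧ m ≤ 0 ∧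
      ∀ i : ℕ, i < n →
        fibChain (k + (i : ℤ) + 1) - fibChain (k + (i : ℤ)) =
          fibChain (m + (i : ℤ) + 1) - fibChain (m + (i : ℤ)) := by
  obtain ⟨m, h1, h2, h3⟩ := key n k
  refine ⟨m, h1, h2, ?_⟩
  intro i hi
  rw [gap (k + i), gap (m + i)]
  have := h3 i hi
  by_cases h : u (k + i) < sig
  · rw [if_pos h, if_pos (this.mp h)]
  · rw [if_neg h, if_neg (fun hc => h (this.mpr hc))]
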